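/- Let P^R be a set of tgds, P^C a set of negative constraints, D an extensional database, and Q a Boolean conjunctive query. Then P^R ∪ P^C ∪ D ⊨ Q if and only if either (a) P^R ∪ D ⊨ Q, or (b) for some negative constraint η ∈ P^C, P^R ∪ D ⊨ Q_η, where Q_η is the Boolean conjunctive query obtained as the existential closure of the body of η. -/

import Mathlib

set_option autoImplicit false

/-! # Basic syntax of Datalog± -/

/-- Ground terms: constants, frozen nulls (treated as constants), and labelled nulls. -/
inductive GTerm where
  | const : ℕ → GTerm
  | fconst : ℕ → GTerm
  | null : ℕ → GTerm
deriving DecidableEq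

/-- Terms appearing in rules: variables and constants. -/
inductive Term where
  | var : ℕ → Term
  | const : ℕ → Term
deriving DecidableEq

/-- A (non-ground) atom: a predicate name with a list of terms. -/
structure Atom where
  pred : ℕ
  args : List Term
deriving DecidableEq

/-- A ground atom. -/
structure GAtom where
  pred : ℕ
  args : List GTerm
deriving DecidableEq

/-- A tuple-generating dependency (rule) with a single head atom; the head
variables not occurring in the body are the existentially quantified variables. -/
structure TGD where
  body : List Atom
  head : Atom
deriving DecidableEq

/-- An instance: a (possibly infinite) set of ground atoms. -/
abbrev Inst := Set GAtom

/-- A predicate position: predicate name together with an argument index. -/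
abbrev Pos := ℕ × ℕ

def GTerm.isConst : GTerm → Prop
  | .const _ => True
  | .fconst _ => True
  | .null _ => False

def applyTerm (θ : ℕ → GTerm) : Term → GTerm
  | .var v => θ v
  | .const c => .const c

def applyAtom (θ : ℕ → GTerm) (a : Atom) : GAtom :=
  ⟨a.pred, a.args.map (applyTerm θ)⟩

def varInAtom (x : ℕ) (a : Atom) : Prop := Term.var x ∈ a.args

def varInBody (σ : TGD) (x : ℕ) : Prop := ∃ a ∈ σ.body, varInAtom x a

def varInHead (σ : TGD) (x : ℕ) : Prop := varInAtom x σ.head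

/-- Existential variables of a rule: head variables not occurring in the body. -/
def isExistVar (σ : TGD) (z : ℕ) : Prop := varInHead σ z ∧ ¬ varInBody σ z

/-- The set of body positions at which variable `x` occurs in rule `σ`. -/
def bodyPos (σ : TGD) (x : ℕ) : Set Pos :=
  { p | ∃ a ∈ σ.body, a.pred = p.1 ∧ a.args[p.2]? = some (Term.var x) }

/-- The set of head positions at which variable `x` occurs in rule `σ`. -/
def headPos (σ : TGD) (x : ℕ) : Set Pos :=
  { p | σ.head.pred = p.1 ∧ σ.head.args[p.2]? = some (Term.var x) }

/-- The number of occurrences of variable `x` in the body of `σ`. -/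
def occCount (σ : TGD) (x : ℕ) : ℕ :=
  (σ.body.map (fun a => a.args.count (Term.var x))).sum

/-- The nulls occurring in an instance. -/
def nullsOf (I : Inst) : Set ℕ := { n | ∃ a ∈ I, GTerm.null n ∈ a.args }

/-- Satisfaction of a tgd by an instance (as a first-order implication). -/
def satTGD (I : Inst) (σ : TGD) : Prop :=
  ∀ θ : ℕ → GTerm, (∀ a ∈ σ.body, applyAtom θ a ∈ I) →
    ∃ θ' : ℕ → GTerm, (∀ v, varInBody σ v → θ' v = θ v) ∧ applyAtom θ' σ.head ∈ I

/-- An extensional database: a finite set of ground atoms over constants only. -/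
def IsEDB (D : Finset GAtom) : Prop :=
  ∀ a ∈ D, ∀ t ∈ a.args, ∃ c, t = GTerm.const c

/-! # The chase -/

/-- A chase step with rule `σ`, assignment `θ` for the body, and extension `θ'`
mapping the existential variables to pairwise distinct fresh nulls. -/
def ChaseStep (P : Set TGD) (σ : TGD) (θ θ' : ℕ → GTerm) (I J : Inst) : Prop :=
  σ ∈ P ∧
  (∀ a ∈ σ.body, applyAtom θ a ∈ I) ∧
  (∀ v, varInBody σ v → θ' v = θ v) ∧
  (∀ z, isExistVar σ z → ∃ n, θ' z = GTerm.null n ∧ n ∉ nullsOf I) ∧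
  (∀ z z', isExistVar σ z → isExistVar σ z' → θ' z = θ' z' → z = z') ∧
  applyAtom θ' σ.head ∉ I ∧
  J = insert (applyAtom θ' σ.head) I

/-- A (fair) chase sequence for the program `P` with extensional database `D`. -/
structure ChaseSeq (P : Set TGD) (D : Set GAtom) where
  seq : ℕ → Inst
  init : seq 0 = D
  step : ∀ n, seq (n + 1) = seq n ∨ ∃ σ θ θ', ChaseStep P σ θ θ' (seq n) (seq (n + 1))
  mono : ∀ n, seq n ⊆ seq (n + 1)
  fair : ∀ n σ θ, σ ∈ P → (∀ a ∈ σ.body, applyAtom θ a ∈ seq n) →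
    ∃ m θ'', (∀ v, varInBody σ v → θ'' v = θ v) ∧ applyAtom θ'' σ.head ∈ seq m

/-- The (possibly infinite) chase instance produced by a chase sequence. -/
def ChaseSeq.res {P : Set TGD} {D : Set GAtom} (c : ChaseSeq P D) : Inst := ⋃ n, c.seq n

/-- The values appearing in an instance at a given position. -/
def valuesAt (I : Inst) (p : Pos) : Set GTerm :=
  { t | ∃ a ∈ I, a.pred = p.1 ∧ a.args[p.2]? = some t }

/-- The values appearing in an instance at any of the given positions. -/
def valsIn (I : Inst) (Sel : Set Pos) : Set GTerm := ⋃ p ∈ Sel, valuesAt I p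

/-- The finite positions of a program: those in which only finitely many
distinct values appear during the chase. -/
def FinPos (P : Set TGD) (D : Set GAtom) : Set Pos :=
  { p | ∀ c : ChaseSeq P D, (valuesAt c.res p).Finite }

/-- The chase relation: `A <_{P,D} B` inside a chase sequence. -/
def chaseRel {P : Set TGD} {D : Set GAtom} (c : ChaseSeq P D) (A B : GAtom) : Prop :=
  ∃ n σ θ θ', ChaseStep P σ θ θ' (c.seq n) (c.seq (n + 1)) ∧
    (∃ a ∈ σ.body, applyAtom θ a = A) ∧ B = applyAtom θ' σ.head

/-- The derivation relation: transitive closure of the chase relation. -/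
def derives {P : Set TGD} {D : Set GAtom} (c : ChaseSeq P D) : GAtom → GAtom → Prop :=
  Relation.TransGen (chaseRel c)

/-! # Selection functions and the semantic classes sch(S) -/

/-- A selection function assigns to every program (rules plus EDB) a set of
positions that are finite positions of the program. -/
def IsSelFn (Sel : Set TGD → Finset GAtom → Set Pos) : Prop :=
  ∀ (P : Set TGD) (D : Finset GAtom), IsEDB D → Sel P D ⊆ FinPos P ↑D

/-- Computability surrogate for a selection function. -/
def SelFnComputable (Sel : Set TGD → Finset GAtom → Set Pos) : Prop :=
  ∃ f : Set TGD → Finset GAtom → Pos → Bool,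
    ∀ P D p, f P D p = true ↔ p ∈ Sel P D

/-- `S`-stickiness of the chase: membership in the semantic class sch(S). -/
def SchMem (Sel : Set TGD → Finset GAtom → Set Pos) (P : Set TGD) (D : Finset GAtom) : Prop :=
  ∀ c : ChaseSeq P ↑D, ∀ n σ θ θ',
    ChaseStep P σ θ θ' (c.seq n) (c.seq (n + 1)) →
    ∀ x, 2 ≤ occCount σ x → (∀ p ∈ bodyPos σ x, p ∉ Sel P D) →
      θ x ∈ (applyAtom θ' σ.head).args ∧
      ∀ B, derives c (applyAtom θ' σ.head) B → θ x ∈ B.args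

/-! # The marking procedure and the syntactic classes syn-sch(S) -/

/-- The marking procedure of sticky Datalog±, as an inductively defined set of
marked body variables of the rules of `P`. -/
inductive Marked (P : Set TGD) : TGD → ℕ → Prop where
  | prelim (σ : TGD) (x : ℕ) : σ ∈ P → varInBody σ x → ¬ varInHead σ x → Marked P σ x
  | prop (σ σ' : TGD) (x w : ℕ) (p : Pos) : σ ∈ P → σ' ∈ P → Marked P σ x →
      p ∈ bodyPos σ x → varInBody σ' w → p ∈ headPos σ' w → Marked P σ' w

/-- Membership in the syntactic class syn-sch(S) for the (syntactic) selection
function determined by `g`: every repeated body variable is non-marked or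
occurs in a position selected by `g`. -/
def SynSch (g : Set TGD → Set Pos) (P : Set TGD) : Prop :=
  ∀ σ ∈ P, ∀ x, 2 ≤ occCount σ x → Marked P σ x → ∃ p ∈ bodyPos σ x, p ∈ g P

/-! # Dependency graph, rank, existential dependency graph, ∃-rank -/

/-- Edge of the dependency graph DG(P). -/
def dgEdge (P : Set TGD) (p p' : Pos) : Prop :=
  ∃ σ ∈ P, ∃ x, varInHead σ x ∧ p ∈ bodyPos σ x ∧ p' ∈ headPos σ x

/-- Special edge of the dependency graph DG(P). -/
def dgSEdge (P : Set TGD) (p p'' : Pos) : Prop :=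
  ∃ σ ∈ P, ∃ x z, varInHead σ x ∧ p ∈ bodyPos σ x ∧ isExistVar σ z ∧ p'' ∈ headPos σ z

/-- `SpecialCount P p n`: there is a path of DG(P) ending at `p` with at least
`n` special edges. -/
inductive SpecialCount (P : Set TGD) : Pos → ℕ → Prop where
  | zero (p : Pos) : SpecialCount P p 0
  | edge (p q : Pos) (n : ℕ) : dgEdge P p q → SpecialCount P p n → SpecialCount P q n
  | sedge (p q : Pos) (n : ℕ) : dgSEdge P p q → SpecialCount P p n → SpecialCount P q (n + 1)

/-- The finite-rank positions of `P`. -/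
def rankF (P : Set TGD) : Set Pos := { p | ∃ k, ∀ n, SpecialCount P p n → n ≤ k }

/-- Target positions `T_z` of the existential variable `z` of rule `σ`. -/
inductive TargetPos (P : Set TGD) (σ : TGD) (z : ℕ) : Pos → Prop where
  | base (p : Pos) : p ∈ headPos σ z → TargetPos P σ z p
  | closure (σ' : TGD) (x : ℕ) (p : Pos) : σ' ∈ P → varInBody σ' x →
      (∀ q ∈ bodyPos σ' x, TargetPos P σ z q) → p ∈ headPos σ' x → TargetPos P σ z p

/-- Nodes of the existential dependency graph EDG(P). -/
def ENode (P : Set TGD) : Set (TGD × ℕ) := { v | v.1 ∈ P ∧ isExistVar v.1 v.2 }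

/-- Edges of EDG(P). -/
def eEdge (P : Set TGD) (u v : TGD × ℕ) : Prop :=
  u ∈ ENode P ∧ v ∈ ENode P ∧
    ∃ x, varInBody v.1 x ∧ ∀ q ∈ bodyPos v.1 x, TargetPos P u.1 u.2 q

/-- `EPathLen P v n`: there is a path of EDG(P) with `n` nodes ending at `v`. -/
inductive EPathLen (P : Set TGD) : TGD × ℕ → ℕ → Prop where
  | single (v : TGD × ℕ) : v ∈ ENode P → EPathLen P v 1
  | cons (u v : TGD × ℕ) (n : ℕ) : eEdge P u v → EPathLen P u n → EPathLen P v (n + 1)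

/-- The ∃-rank of position `p` is at least `n`. -/
def eRankGE (P : Set TGD) (p : Pos) (n : ℕ) : Prop :=
  ∃ v : TGD × ℕ, EPathLen P v n ∧ TargetPos P v.1 v.2 p

/-- The finite-existential positions of `P` (positions of finite ∃-rank). -/
def erankF (P : Set TGD) : Set Pos := { p | ∃ k, ∀ n, eRankGE P p n → n ≤ k }

/-- Weakly-sticky programs. -/
def WS (P : Set TGD) : Prop := SynSch (fun P => rankF P) P

/-- Jointly-weakly-sticky programs. -/
def JWS (P : Set TGD) : Prop := SynSch (fun P => erankF P) P

/-! # Conjunctive queries and certain answers -/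

/-- A conjunctive query: a body (list of atoms) and a list of free variables;
the body variables that are not free are existentially quantified. -/
structure CQuery where
  body : List Atom
  free : List ℕ

def cqHolds (q : List Atom) (θ : ℕ → GTerm) (I : Inst) : Prop :=
  ∀ a ∈ q, applyAtom θ a ∈ I

/-- A Boolean conjunctive query (the existential closure of a list of atoms)
is true in an instance. -/
def bcqTrue (q : List Atom) (I : Inst) : Prop := ∃ θ, cqHolds q θ I

/-- The answers to a conjunctive query over an instance. -/
def answers (Q : CQuery) (I : Inst) : Set (List GTerm) :=
  { t | ∃ θ, cqHolds Q.body θ I ∧ t = Q.free.map θ }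

/-- `I` is a model of the program `P ∪ D`. -/
def isModel (P : Set TGD) (D : Set GAtom) (I : Inst) : Prop :=
  D ⊆ I ∧ ∀ σ ∈ P, satTGD I σ

/-- Tuples of (non-null, non-frozen) constants. -/
def nullFreeTuple (t : List GTerm) : Prop := ∀ s ∈ t, ∃ c, s = GTerm.const c

/-- The certain answers to a conjunctive query over a program. -/
def certAns (P : Set TGD) (D : Set GAtom) (Q : CQuery) : Set (List GTerm) :=
  { t | nullFreeTuple t ∧ ∀ I, isModel P D I → t ∈ answers Q I }

def atomVars (a : Atom) : Finset ℕ :=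
  (a.args.filterMap (fun t => match t with | .var v => some v | _ => none)).toFinset

def cqBodyVars (Q : CQuery) : Finset ℕ := (Q.body.map atomVars).foldr (· ∪ ·) ∅

def cqAllVars (Q : CQuery) : Finset ℕ := cqBodyVars Q ∪ Q.free.toFinset

/-- The number `M_Q` of existentially quantified variables of a conjunctive query. -/
def Mq (Q : CQuery) : ℕ := (cqBodyVars Q \ Q.free.toFinset).card

/-! # Sizes and numeric parameters -/

def tgdPreds (σ : TGD) : Finset ℕ := insert σ.head.pred (σ.body.map Atom.pred).toFinset

def progPreds (P : Finset TGD) : Finset ℕ := P.biUnion tgdPreds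

def tgdMaxAr (σ : TGD) : ℕ :=
  max σ.head.args.length ((σ.body.map (fun a => a.args.length)).foldr max 0)

/-- Maximum arity of the predicates of `P`. -/
def progMaxAr (P : Finset TGD) : ℕ := P.sup tgdMaxAr

def tgdVars (σ : TGD) : Finset ℕ := atomVars σ.head ∪ (σ.body.map atomVars).foldr (· ∪ ·) ∅

/-- Maximum number of variables in a rule of `P`. -/
def progMaxVars (P : Finset TGD) : ℕ := P.sup (fun σ => (tgdVars σ).card)

def atomSize (a : Atom) : ℕ := 1 + a.args.length

def tgdSize (σ : TGD) : ℕ := 1 + atomSize σ.head + (σ.body.map atomSize).sum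

/-- The size of a (finite) set of rules. -/
def progSize (P : Finset TGD) : ℕ := ∑ σ ∈ P, tgdSize σ

def edbConsts (D : Finset GAtom) : Finset ℕ :=
  D.biUnion (fun a =>
    (a.args.filterMap (fun t => match t with | GTerm.const c => some c | _ => none)).toFinset)

/-- The number of constants of the extensional database `D`. -/
def numConst (D : Finset GAtom) : ℕ := (edbConsts D).card

/-- The size of the extensional database `D`. -/
def edbSize (D : Finset GAtom) : ℕ := ∑ a ∈ D, (1 + a.args.length)

/-- Surrogate for "the property `R` is decidable in polynomial time in `size`":
there are a Boolean decision function and a polynomially bounded running time. -/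
def DecidesInPolyTime {α : Type*} (size : α → ℕ) (R : α → Prop) : Prop :=
  ∃ (f : α → Bool) (time : α → ℕ) (c k : ℕ),
    (∀ a, f a = true ↔ R a) ∧ ∀ a, time a ≤ c * size a ^ k + c

/-! # Proof trees and proof-tree schemas -/

/-- Ground trees of atoms. -/
inductive GTree where
  | node : GAtom → List GTree → GTree

def GTree.root : GTree → GAtom
  | .node a _ => a

/-- Proof trees: leaves are extensional atoms, internal nodes are obtained from
their children by a rule enforcement. -/
inductive IsProofTree (P : Set TGD) (D : Set GAtom) : GTree → Prop where
  | leaf (a : GAtom) : a ∈ D → IsProofTree P D (.node a [])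
  | step (σ : TGD) (θ θ' : ℕ → GTerm) (ts : List GTree) :
      σ ∈ P →
      (∀ v, varInBody σ v → θ' v = θ v) →
      (∀ z, isExistVar σ z → ∃ n, θ' z = GTerm.null n) →
      ts.map GTree.root = σ.body.map (applyAtom θ) →
      (∀ t ∈ ts, IsProofTree P D t) →
      IsProofTree P D (.node (applyAtom θ' σ.head) ts)

/-- Non-ground trees of atoms. -/
inductive ATree where
  | node : Atom → List ATree → ATree

def ATree.root : ATree → Atom
  | .node a _ => a

/-- The atom sitting at a given tree position (a list of child indices). -/
inductive NodeAt : ATree → List ℕ → Atom → Prop where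
  | here (a : Atom) (ts : List ATree) : NodeAt (.node a ts) [] a
  | child (a : Atom) (ts : List ATree) (i : ℕ) (t : ATree) (p : List ℕ) (b : Atom) :
      ts[i]? = some t → NodeAt t p b → NodeAt (.node a ts) (i :: p) b

def substT (s : ℕ → Term) : Term → Term
  | .var v => s v
  | .const c => .const c

def substAtom (s : ℕ → Term) (a : Atom) : Atom := ⟨a.pred, a.args.map (substT s)⟩

/-- A schema-level rule application: the node atom and its children are images
of the head and the body of a rule of `P` under a (term) substitution. -/
def SchemaStep (P : Set TGD) (a : Atom) (children : List Atom) : Prop :=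
  ∃ σ ∈ P, ∃ s s' : ℕ → Term,
    (∀ v, varInBody σ v → s' v = s v) ∧
    children = σ.body.map (substAtom s) ∧ a = substAtom s' σ.head

/-- A schema tree over a set of rules. -/
inductive IsSchemaTree (P : Set TGD) : ATree → Prop where
  | leaf (a : Atom) : IsSchemaTree P (.node a [])
  | step (a : Atom) (ts : List ATree) : ts ≠ [] → SchemaStep P a (ts.map ATree.root) →
      (∀ t ∈ ts, IsSchemaTree P t) → IsSchemaTree P (.node a ts)

/-- Two tree positions lie on a same root-to-leaf path. -/
def OnSamePath (p q : List ℕ) : Prop := p <+: q ∨ q <+: p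

/-- A type (I) variable of a schema: one occurring in two atoms not on a same path. -/
def TypeIVar (T : ATree) (x : ℕ) : Prop :=
  ∃ p q a b, NodeAt T p a ∧ NodeAt T q b ∧ ¬ OnSamePath p q ∧ varInAtom x a ∧ varInAtom x b

def renameAtom (ρ : ℕ → ℕ) (a : Atom) : Atom :=
  ⟨a.pred, a.args.map (fun t => match t with | .var v => .var (ρ v) | .const c => .const c)⟩

/-- Succinctness of a proof-tree schema: no atom on a path can be transformed
into another atom on the same path by renaming variables of type (II)
(i.e. by a renaming that is the identity on type (I) variables). -/
def SuccinctSchema (T : ATree) : Prop :=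
  ∀ p q a b, NodeAt T p a → NodeAt T q b → p ≠ q → OnSamePath p q →
    ¬ ∃ ρ : ℕ → ℕ, (∀ x, TypeIVar T x → ρ x = x) ∧ renameAtom ρ b = a

/-- Instantiation of a schema tree into a ground tree. -/
inductive Instantiates (τ : ℕ → GTerm) : ATree → GTree → Prop where
  | node (a : Atom) (ts : List ATree) (gts : List GTree) :
      ts.length = gts.length →
      (∀ (i : ℕ) (t : ATree) (g : GTree), ts[i]? = some t → gts[i]? = some g → Instantiates τ t g) →
      Instantiates τ (.node a ts) (.node (applyAtom τ a) gts)

/-- `HeightLE T n`: every root-to-leaf path of `T` has at most `n` atoms. -/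
inductive HeightLE : ATree → ℕ → Prop where
  | node (a : Atom) (ts : List ATree) (n : ℕ) :
      (∀ t ∈ ts, HeightLE t n) → HeightLE (.node a ts) (n + 1)

/-- The auxiliary query rule whose head collects the answers to `Q`. -/
def queryRule (Q : CQuery) (n : ℕ) : TGD := ⟨Q.body, ⟨n, Q.free.map Term.var⟩⟩

/-- `T` is a proof-tree schema for the answer `t` to the query `Q` (represented
via the auxiliary query predicate `n`) over the program `P ∪ D`. -/
def ProofSchemaFor (P : Set TGD) (D : Set GAtom) (Q : CQuery) (n : ℕ) (t : List GTerm)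
    (T : ATree) : Prop :=
  IsSchemaTree (insert (queryRule Q n) P) T ∧ SuccinctSchema T ∧
  T.root.pred = n ∧
  ∃ τ G, Instantiates τ T G ∧ IsProofTree (insert (queryRule Q n) P) D G ∧
    G.root = ⟨n, t⟩

/-! # The query-driven chase qchase and the algorithm SChQA -/

/-- Freezing a ground term: nulls become (fresh) frozen constants. -/
def freezeT : GTerm → GTerm
  | .null n => .fconst n
  | t => t

/-- Freezing every null of an instance. -/
def freezeI (I : Inst) : Inst := (fun a => GAtom.mk a.pred (a.args.map freezeT)) '' I

/-- `A` is `Π`-homomorphic to `B` (for a set of positions `Sel`): a homomorphism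
(identity on constants and frozen constants) maps `A` to `B` and is the
identity on the terms of `A` in positions of `Sel`. -/
def PiHom (Sel : Set Pos) (A B : GAtom) : Prop :=
  ∃ h : GTerm → GTerm,
    (∀ t : GTerm, t.isConst → h t = t) ∧
    A.pred = B.pred ∧ A.args.map h = B.args ∧
    (∀ (i : ℕ) (t : GTerm), (A.pred, i) ∈ Sel → A.args[i]? = some t → h t = t)

/-- One step of the query-driven chase: a rule-assignment pair that is
`Sel`-applicable over `I` is enforced. -/
def QChaseStep (Sel : Set Pos) (P : Set TGD) (I J : Inst) : Prop :=
  ∃ σ θ θ', σ ∈ P ∧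
    (∀ a ∈ σ.body, applyAtom θ a ∈ I) ∧
    (∀ v, varInBody σ v → θ' v = θ v) ∧
    (∀ z, isExistVar σ z → ∃ n, θ' z = GTerm.null n ∧ n ∉ nullsOf I) ∧
    (∀ z z', isExistVar σ z → isExistVar σ z' → θ' z = θ' z' → z = z') ∧
    (∀ B ∈ I, ¬ PiHom Sel (applyAtom θ' σ.head) B) ∧
    J = insert (applyAtom θ' σ.head) I

/-- `J` is a saturation of `I`: obtained from `I` by `Sel`-applicable steps,
with no `Sel`-applicable pair left. -/
def Saturation (Sel : Set Pos) (P : Set TGD) (I J : Inst) : Prop :=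
  Relation.ReflTransGen (QChaseStep Sel P) I J ∧ ∀ K, ¬ QChaseStep Sel P J K

/-- Result of the query-driven chase with `m` resumptions (Step 2 freezes all
nulls and returns to Step 1). -/
def QChaseRes (Sel : Set Pos) (P : Set TGD) (D : Inst) : ℕ → Inst → Prop
  | 0 => fun J => Saturation Sel P D J
  | (m + 1) => fun K => ∃ J, QChaseRes Sel P D m J ∧ Saturation Sel P (freezeI J) K

/-- There is no infinite `R`-chain starting at `a`. -/
def NoInfiniteChain {α : Type*} (R : α → α → Prop) (a : α) : Prop :=
  ¬ ∃ f : ℕ → α, f 0 = a ∧ ∀ n, R (f n) (f (n + 1))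

/-- Surrogate for "conjunctive query answering for the fixed rules `P` and query `Q`
can be done in polynomial time in the size of the EDB, over EDBs satisfying `Cond`". -/
def CQAInPolyTime (P : Set TGD) (Q : CQuery) (Cond : Finset GAtom → Prop) : Prop :=
  ∃ (f : Finset GAtom → List GTerm → Bool) (time : Finset GAtom → List GTerm → ℕ) (c k : ℕ),
    (∀ (D : Finset GAtom) (t : List GTerm), IsEDB D → Cond D →
      (f D t = true ↔ t ∈ certAns P ↑D Q)) ∧
    ∀ (D : Finset GAtom) (t : List GTerm), time D t ≤ c * edbSize D ^ k + c

/-! # Magic-sets rewriting MagicD+ -/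

/-- An adornment: a list of Booleans (`true` = bound, `false` = free). -/
abbrev Adn := List Bool

/-- The adorned version of predicate `q` with adornment `α`
(predicates of the input program are assumed to be ≡ 0 mod 3). -/
def adPred (q : ℕ) (α : Adn) : ℕ := 3 * Nat.pair q (Encodable.encode α) + 1

/-- The magic predicate for predicate `q` with adornment `α`. -/
def mgPred (q : ℕ) (α : Adn) : ℕ := 3 * Nat.pair q (Encodable.encode α) + 2

/-- The adorned version of an atom. -/
def adornAtom (a : Atom) (α : Adn) : Atom := ⟨adPred a.pred α, a.args⟩

/-- The terms of an atom in the bound positions of an adornment. -/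
def boundArgs (a : Atom) (α : Adn) : List Term :=
  ((a.args.zip α).filter (fun x => x.2)).map Prod.fst

/-- The magic atom of an atom w.r.t. an adornment. -/
def magicAtom (a : Atom) (α : Adn) : Atom := ⟨mgPred a.pred α, boundArgs a α⟩

/-- Intentional predicates: those occurring in some rule head. -/
def intentional (P : Set TGD) (q : ℕ) : Prop := ∃ σ ∈ P, σ.head.pred = q

/-- An abstract side-way information passing strategy (sips) family: for every rule
and head adornment, a strict partial order on the body-atom indices together with
the sets of variables that are bound after processing each body atom. -/
structure SipsFam where
  ord : TGD → Adn → ℕ → ℕ → Prop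
  fb : TGD → Adn → ℕ → Finset ℕ
  irrefl : ∀ σ α i, ¬ ord σ α i i
  trans : ∀ σ α i j l, ord σ α i j → ord σ α j l → ord σ α i l
  fbSub : ∀ σ α i, ∀ x ∈ fb σ α i, ∃ a, σ.body[i]? = some a ∧ varInAtom x a

/-- The head variables bound by an adornment. -/
def hdBound (σ : TGD) (α : Adn) : Set ℕ :=
  { x | ∃ i : ℕ, α[i]? = some true ∧ σ.head.args[i]? = some (Term.var x) }

/-- The variables that are bound and available when processing body atom `i`. -/
def availVars (S : SipsFam) (σ : TGD) (α : Adn) (i : ℕ) : Set ℕ :=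
  hdBound σ α ∪ { x | ∃ j, S.ord σ α j i ∧ x ∈ S.fb σ α j }

def termBound (V : Set ℕ) : Term → Prop
  | .const _ => True
  | .var x => x ∈ V

/-- `β` is the adornment of the `i`-th body atom of `σ` induced by the sips. -/
def IsBodyAdn (S : SipsFam) (σ : TGD) (α : Adn) (i : ℕ) (β : Adn) : Prop :=
  ∃ a, σ.body[i]? = some a ∧ β.length = a.args.length ∧
    ∀ (j : ℕ) (t : Term), a.args[j]? = some t →
      (β[j]? = some true ↔ termBound (availVars S σ α i) t)

/-- A head adornment is admissible for `σ` when it binds no position holding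
an existential variable. -/
def AdnOK (σ : TGD) (α : Adn) : Prop :=
  ∀ (i : ℕ) (z : ℕ), α[i]? = some true → σ.head.args[i]? = some (Term.var z) →
    ¬ isExistVar σ z

/-- The transformed body of a rule: intentional atoms are adorned according to
the sips, extensional atoms are kept unchanged. -/
def BodyTrans (P : Set TGD) (S : SipsFam) (σ : TGD) (α : Adn) (b : List Atom) : Prop :=
  b.length = σ.body.length ∧
  ∀ (i : ℕ) (a : Atom), σ.body[i]? = some a →
    (intentional P a.pred → ∃ β, IsBodyAdn S σ α i β ∧ b[i]? = some (adornAtom a β)) ∧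
    (¬ intentional P a.pred → b[i]? = some a)

/-- The adornment of the query atom: positions holding constants are bound. -/
def queryAdn (Qa : Atom) : Adn :=
  Qa.args.map (fun t => match t with | Term.const _ => true | Term.var _ => false)

/-- The adorned predicates (pairs of predicate and adornment) generated by
MagicD+, starting from the query and propagating through the rules. -/
inductive AdGen (P : Set TGD) (S : SipsFam) (Qa : Atom) : ℕ → Adn → Prop where
  | query : AdGen P S Qa Qa.pred (queryAdn Qa)
  | step (q : ℕ) (α : Adn) (σ : TGD) (i : ℕ) (a : Atom) (β : Adn) :
      AdGen P S Qa q α → σ ∈ P → σ.head.pred = q → AdnOK σ α →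
      σ.body[i]? = some a → intentional P a.pred → IsBodyAdn S σ α i β →
      AdGen P S Qa a.pred β

/-- A list of fresh variables `x₀,…,x_{n-1}`. -/
def varsList (n : ℕ) : List Term := (List.range n).map Term.var

/-- The result `P_m` of the MagicD+ rewriting of the rules `P` w.r.t. the
(atomic) query `Qa` and the sips family `S`: adorned rules guarded by magic
atoms, magic rules, the seed, and the rules loading extensional data. -/
def MagicProg (P : Set TGD) (S : SipsFam) (Qa : Atom) : Set TGD :=
  -- (Steps 1 and 2) adorned rules with the magic atom of the head added to the body
  { ρ | ∃ (q : ℕ) (α : Adn) (σ : TGD) (b : List Atom),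
        AdGen P S Qa q α ∧ σ ∈ P ∧ σ.head.pred = q ∧ AdnOK σ α ∧
        BodyTrans P S σ α b ∧
        ρ = ⟨magicAtom σ.head α :: b, adornAtom σ.head α⟩ } ∪
  -- (Step 3) magic rules: for each adorned body atom, its magic predicate is
  -- defined from the head's magic atom and the sips-preceding transformed atoms
  { ρ | ∃ (q : ℕ) (α : Adn) (σ : TGD) (b : List Atom) (i : ℕ) (a : Atom) (β : Adn)
          (js : List ℕ),
        AdGen P S Qa q α ∧ σ ∈ P ∧ σ.head.pred = q ∧ AdnOK σ α ∧
        BodyTrans P S σ α b ∧ σ.body[i]? = some a ∧ intentional P a.pred ∧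
        IsBodyAdn S σ α i β ∧
        js.Pairwise (· < ·) ∧ (∀ j : ℕ, j ∈ js ↔ (j < σ.body.length ∧ S.ord σ α j i)) ∧
        ρ = ⟨magicAtom σ.head α :: js.filterMap (fun j => b[j]?), magicAtom a β⟩ } ∪
  -- (Step 3) the seed, as a bodyless rule
  { ρ | ρ = ⟨[], magicAtom Qa (queryAdn Qa)⟩ } ∪
  -- (Step 4) rules loading the extensional data of adorned intentional predicates
  { ρ | ∃ (q : ℕ) (α : Adn),
        AdGen P S Qa q α ∧ intentional P q ∧
        ρ = ⟨[magicAtom ⟨q, varsList α.length⟩ α, ⟨q, varsList α.length⟩],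
             adornAtom ⟨q, varsList α.length⟩ α⟩ }

/-! # Entailment under tgds and negative constraints -/

/-- A negative constraint is represented by its body (a list of atoms);
an instance satisfies it when the existential closure of the body is false. -/
abbrev NegConstraint := List Atom

/-- `P ∪ D ⊨ Q` for a set of tgds `P` and a Boolean conjunctive query `q`. -/
def entailsT (P : Set TGD) (D : Set GAtom) (q : List Atom) : Prop :=
  ∀ I : Inst, isModel P D I → bcqTrue q I

/-- `P ∪ C ∪ D ⊨ Q` for tgds `P` and negative constraints `C`. -/
def entailsTC (P : Set TGD) (C : Set NegConstraint) (D : Set GAtom) (q : List Atom) : Prop :=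
  ∀ I : Inst, isModel P D I → (∀ η ∈ C, ¬ bcqTrue η I) → bcqTrue q I

/-! # Auxiliary development: a universal model for tgds -/

section UniversalModelAux

instance : Encodable GTerm :=
  Encodable.ofEquiv (ℕ ⊕ ℕ ⊕ ℕ)
    { toFun := fun t => match t with
        | .const n => Sum.inl n
        | .fconst n => Sum.inr (Sum.inl n)
        | .null n => Sum.inr (Sum.inr n)
      invFun := fun s => match s with
        | Sum.inl n => .const n
        | Sum.inr (Sum.inl n) => .fconst n
        | Sum.inr (Sum.inr n) => .null n
      left_inv := fun t => by cases t <;> rfl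
      right_inv := fun s => by rcases s with n | n | n <;> rfl }

instance : Encodable Term :=
  Encodable.ofEquiv (ℕ ⊕ ℕ)
    { toFun := fun t => match t with
        | .var n => Sum.inl n
        | .const n => Sum.inr n
      invFun := fun s => match s with
        | Sum.inl n => .var n
        | Sum.inr n => .const n
      left_inv := fun t => by cases t <;> rfl
      right_inv := fun s => by rcases s with n | n <;> rfl }

instance : Encodable Atom :=
  Encodable.ofEquiv (ℕ × List Term)
    { toFun := fun a => (a.pred, a.args)
      invFun := fun p => ⟨p.1, p.2⟩
      left_inv := fun a => rfl
      right_inv := fun p => rfl }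

instance : Encodable TGD :=
  Encodable.ofEquiv (List Atom × Atom)
    { toFun := fun σ => (σ.body, σ.head)
      invFun := fun p => ⟨p.1, p.2⟩
      left_inv := fun σ => rfl
      right_inv := fun p => rfl }

/-- A canonical list of the body variables of a rule. -/
def bodyVarsList (σ : TGD) : List ℕ :=
  (σ.body.map (fun a => a.args)).flatten.filterMap
    (fun t => match t with | .var v => some v | .const _ => none)

lemma mem_bodyVarsList {σ : TGD} {v : ℕ} : v ∈ bodyVarsList σ ↔ varInBody σ v := by
  unfold bodyVarsList varInBody varInAtom
  simp only [List.mem_filterMap, List.mem_flatten, List.mem_map]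
  constructor
  · rintro ⟨t, ⟨l, ⟨a, ha, rfl⟩, ht⟩, hm⟩
    cases t with
    | var w =>
      simp only [Option.some.injEq] at hm
      exact ⟨a, ha, hm ▸ ht⟩
    | const c => simp at hm
  · rintro ⟨a, ha, hv⟩
    exact ⟨Term.var v, ⟨a.args, ⟨a, ha, rfl⟩, hv⟩, rfl⟩

/-- Reconstruct an assignment on the body variables from a list of values. -/
noncomputable def thetaOf (σ : TGD) (vals : List GTerm) : ℕ → GTerm :=
  fun v => vals.getD ((bodyVarsList σ).idxOf v) (GTerm.const 0)

lemma thetaOf_spec (σ : TGD) (θ : ℕ → GTerm) {v : ℕ} (hv : varInBody σ v) :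
    thetaOf σ ((bodyVarsList σ).map θ) v = θ v := by
  have hv' : v ∈ bodyVarsList σ := mem_bodyVarsList.mpr hv
  have hlt : (bodyVarsList σ).idxOf v < (bodyVarsList σ).length :=
    List.idxOf_lt_length_iff.mpr hv'
  unfold thetaOf
  rw [List.getD_eq_getElem _ _ (by simpa using hlt)]
  simp [List.getElem_idxOf hlt]

/-- Code of a fresh null created at stage `n` for rule `σ`, body values `vals`,
and existential variable `v`. -/
def nullCode (n : ℕ) (σ : TGD) (vals : List GTerm) (v : ℕ) : ℕ :=
  Nat.pair n (Nat.pair (Encodable.encode σ) (Nat.pair (Encodable.encode vals) v))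

open Classical in
/-- Extension of a body assignment mapping the non-body variables to fresh nulls. -/
noncomputable def extAsg (n : ℕ) (σ : TGD) (θ : ℕ → GTerm) : ℕ → GTerm :=
  fun v => if varInBody σ v then θ v
           else GTerm.null (nullCode n σ ((bodyVarsList σ).map θ) v)

/-- The stages of the canonical (chase-like) model. -/
def stage (P : Set TGD) (D : Set GAtom) : ℕ → Inst
  | 0 => D
  | n + 1 => stage P D n ∪
      { A | ∃ σ ∈ P, ∃ θ : ℕ → GTerm,
          (∀ a ∈ σ.body, applyAtom θ a ∈ stage P D n) ∧
          A = applyAtom (extAsg n σ θ) σ.head }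

/-- The canonical model. -/
def univModel (P : Set TGD) (D : Set GAtom) : Inst := ⋃ n, stage P D n

lemma stage_mono (P : Set TGD) (D : Set GAtom) {m n : ℕ} (h : m ≤ n) :
    stage P D m ⊆ stage P D n := by
  induction h with
  | refl => exact Set.Subset.rfl
  | step _ ih => exact ih.trans (by intro A hA; exact Or.inl hA)

/-- Applying a term map to a ground atom. -/
def mapGA (h : GTerm → GTerm) (A : GAtom) : GAtom := ⟨A.pred, A.args.map h⟩

lemma mapGA_applyAtom (h : GTerm → GTerm) (hc : ∀ c, h (GTerm.const c) = GTerm.const c)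
    (θ : ℕ → GTerm) (a : Atom) :
    mapGA h (applyAtom θ a) = applyAtom (fun v => h (θ v)) a := by
  unfold mapGA applyAtom
  simp only [List.map_map]
  congr 1
  apply List.map_congr_left
  intro t _
  cases t with
  | var v => rfl
  | const c => exact hc c

lemma applyAtom_congr {θ₁ θ₂ : ℕ → GTerm} {a : Atom}
    (h : ∀ v, Term.var v ∈ a.args → θ₁ v = θ₂ v) : applyAtom θ₁ a = applyAtom θ₂ a := by
  unfold applyAtom
  congr 1
  apply List.map_congr_left
  intro t ht
  cases t with
  | var v => exact h v ht
  | const c => rfl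

lemma thetaVal_mem {σ : TGD} {θ : ℕ → GTerm} {S : Inst} {v : ℕ}
    (hv : varInBody σ v) (hb : ∀ a ∈ σ.body, applyAtom θ a ∈ S) :
    ∃ A ∈ S, θ v ∈ A.args := by
  obtain ⟨a, ha, hva⟩ := hv
  refine ⟨applyAtom θ a, hb a ha, ?_⟩
  unfold applyAtom
  exact List.mem_map_of_mem hva

/-- Every null occurring at stage `n` was created at an earlier stage. -/
lemma nullStage (P : Set TGD) (D : Set GAtom)
    (hD : ∀ A ∈ D, ∀ t ∈ A.args, ∃ c, t = GTerm.const c) :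
    ∀ n, ∀ A ∈ stage P D n, ∀ k, GTerm.null k ∈ A.args → (Nat.unpair k).1 < n := by
  intro n
  induction n with
  | zero =>
    intro A hA k hk
    obtain ⟨c, hc⟩ := hD A hA _ hk
    cases hc
  | succ n ih =>
    intro A hA k hk
    rcases hA with hA | ⟨σ, hσ, θ, hb, rfl⟩
    · exact (ih A hA k hk).trans (Nat.lt_succ_self n)
    · unfold applyAtom at hk
      simp only [List.mem_map] at hk
      obtain ⟨t, ht, hts⟩ := hk
      cases t with
      | const c => simp [applyTerm] at hts
      | var v =>
        by_cases hv : varInBody σ v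
        · have : θ v = GTerm.null k := by simpa [applyTerm, extAsg, hv] using hts
          obtain ⟨B, hB, hmem⟩ := thetaVal_mem hv hb
          rw [this] at hmem
          exact (ih B hB k hmem).trans (Nat.lt_succ_self n)
        · have : k = nullCode n σ ((bodyVarsList σ).map θ) v := by
            simpa [applyTerm, extAsg, hv] using hts.symm
          simp [this, nullCode, Nat.unpair_pair]

open Classical in
/-- Extension of a homomorphism to the nulls created at stage `n`. -/
noncomputable def extendHom (n : ℕ) (h : GTerm → GTerm) (W : TGD → List GTerm → ℕ → GTerm) :
    GTerm → GTerm
  | GTerm.null k =>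
      if (Nat.unpair k).1 = n then
        match (Encodable.decode (Nat.unpair (Nat.unpair k).2).1 : Option TGD),
              (Encodable.decode (Nat.unpair (Nat.unpair (Nat.unpair k).2).2).1 :
                Option (List GTerm)) with
        | some σ, some vals => W σ vals (Nat.unpair (Nat.unpair (Nat.unpair k).2).2).2
        | some _, none => h (GTerm.null k)
        | none, _ => h (GTerm.null k)
      else h (GTerm.null k)
  | t => h t

lemma extendHom_old (n : ℕ) (h : GTerm → GTerm) (W : TGD → List GTerm → ℕ → GTerm)
    (t : GTerm) (ht : ∀ k, t = GTerm.null k → (Nat.unpair k).1 ≠ n) :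
    extendHom n h W t = h t := by
  cases t with
  | const c => rfl
  | fconst c => rfl
  | null k => simp [extendHom, ht k rfl]

lemma extendHom_new (n : ℕ) (h : GTerm → GTerm) (W : TGD → List GTerm → ℕ → GTerm)
    (σ : TGD) (vals : List GTerm) (v : ℕ) :
    extendHom n h W (GTerm.null (nullCode n σ vals v)) = W σ vals v := by
  simp [extendHom, nullCode, Nat.unpair_pair, Encodable.encodek]

/-- The stage-wise homomorphism of the canonical model into an arbitrary model. -/
lemma homStage (P : Set TGD) (D : Set GAtom)
    (hD : ∀ A ∈ D, ∀ t ∈ A.args, ∃ c, t = GTerm.const c)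
    (I : Inst) (hI : isModel P D I) (n : ℕ) :
    ∃ h : GTerm → GTerm, (∀ c, h (GTerm.const c) = GTerm.const c) ∧
      ∀ A ∈ stage P D n, mapGA h A ∈ I := by
  induction n with
  | zero =>
    refine ⟨id, fun c => rfl, fun A hA => ?_⟩
    have : mapGA id A = A := by simp [mapGA]
    rw [this]
    exact hI.1 hA
  | succ n ih =>
    obtain ⟨h, hc, hmap⟩ := ih
    have key : ∀ (σ : TGD) (vals : List GTerm), ∃ W0 : ℕ → GTerm,
        σ ∈ P → (∀ a ∈ σ.body, applyAtom (thetaOf σ vals) a ∈ stage P D n) →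
        (∀ v, varInBody σ v → W0 v = h (thetaOf σ vals v)) ∧
          applyAtom W0 σ.head ∈ I := by
      intro σ vals
      by_cases hcond : σ ∈ P ∧ ∀ a ∈ σ.body, applyAtom (thetaOf σ vals) a ∈ stage P D n
      · have hbody : ∀ a ∈ σ.body, applyAtom (fun v => h (thetaOf σ vals v)) a ∈ I := by
          intro a ha
          rw [← mapGA_applyAtom h hc]
          exact hmap _ (hcond.2 a ha)
        obtain ⟨θ', hθ'1, hθ'2⟩ := hI.2 σ hcond.1 (fun v => h (thetaOf σ vals v)) hbody
        exact ⟨θ', fun _ _ => ⟨hθ'1, hθ'2⟩⟩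
      · exact ⟨fun _ => GTerm.const 0, fun h1 h2 => absurd ⟨h1, h2⟩ hcond⟩
    choose W hW using key
    refine ⟨extendHom n h W, fun c => hc c, ?_⟩
    intro A hA
    rcases hA with hA | ⟨σ, hσ, θ, hb, rfl⟩
    · -- old atoms: extendHom agrees with h on all their terms
      have : mapGA (extendHom n h W) A = mapGA h A := by
        unfold mapGA
        congr 1
        apply List.map_congr_left
        intro t ht
        refine extendHom_old n h W t ?_
        rintro k rfl
        exact Nat.ne_of_lt (nullStage P D hD n A hA k ht)
      rw [this]
      exact hmap A hA
    · -- new atoms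
      set vals := (bodyVarsList σ).map θ with hvals
      have hagree : ∀ v, varInBody σ v → thetaOf σ vals v = θ v :=
        fun v hv => thetaOf_spec σ θ hv
      have hb' : ∀ a ∈ σ.body, applyAtom (thetaOf σ vals) a ∈ stage P D n := by
        intro a ha
        have : applyAtom (thetaOf σ vals) a = applyAtom θ a :=
          applyAtom_congr (fun v hv => hagree v ⟨a, ha, hv⟩)
        rw [this]
        exact hb a ha
      obtain ⟨hWagree, hWhead⟩ := hW σ vals hσ hb'
      have : mapGA (extendHom n h W) (applyAtom (extAsg n σ θ) σ.head)
          = applyAtom (W σ vals) σ.head := by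
        unfold mapGA applyAtom
        simp only [List.map_map]
        congr 1
        apply List.map_congr_left
        intro t ht
        cases t with
        | const c => exact hc c
        | var v =>
          by_cases hv : varInBody σ v
          · have h1 : (extAsg n σ θ) v = θ v := by simp [extAsg, hv]
            simp only [Function.comp_apply, applyTerm, h1]
            have h2 : extendHom n h W (θ v) = h (θ v) := by
              refine extendHom_old n h W (θ v) ?_
              rintro k hk
              obtain ⟨B, hB, hmem⟩ := thetaVal_mem hv hb
              rw [hk] at hmem
              exact Nat.ne_of_lt (nullStage P D hD n B hB k hmem)
            rw [h2, hWagree v hv, hagree v hv]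
          · have h1 : (extAsg n σ θ) v = GTerm.null (nullCode n σ vals v) := by
              simp [extAsg, hv, hvals]
            simp only [Function.comp_apply, applyTerm, h1]
            exact extendHom_new n h W σ vals v
      rw [this]
      exact hWhead

lemma exists_stage_of_list (P : Set TGD) (D : Set GAtom) (θ : ℕ → GTerm) :
    ∀ l : List Atom, (∀ a ∈ l, applyAtom θ a ∈ univModel P D) →
      ∃ n, ∀ a ∈ l, applyAtom θ a ∈ stage P D n := by
  intro l
  induction l with
  | nil => exact fun _ => ⟨0, fun a ha => absurd ha List.not_mem_nil⟩
  | cons b l ih =>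
    intro hall
    obtain ⟨n, hn⟩ := ih (fun a ha => hall a (List.mem_cons_of_mem b ha))
    obtain ⟨m, hm⟩ := Set.mem_iUnion.mp (hall b List.mem_cons_self)
    refine ⟨max m n, fun a ha => ?_⟩
    rcases List.mem_cons.mp ha with rfl | ha
    · exact stage_mono P D (le_max_left m n) hm
    · exact stage_mono P D (le_max_right m n) (hn a ha)

lemma univModel_isModel (P : Set TGD) (D : Set GAtom) :
    isModel P D (univModel P D) := by
  constructor
  · intro A hA
    exact Set.mem_iUnion.mpr ⟨0, hA⟩
  · intro σ hσ θ hb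
    obtain ⟨n, hn⟩ := exists_stage_of_list P D θ σ.body hb
    refine ⟨extAsg n σ θ, fun v hv => by simp [extAsg, hv], ?_⟩
    refine Set.mem_iUnion.mpr ⟨n + 1, Or.inr ?_⟩
    exact ⟨σ, hσ, θ, hn, rfl⟩

/-- Truth of a BCQ in the canonical model transfers to every model. -/
lemma univModel_transfer (P : Set TGD) (D : Set GAtom)
    (hD : ∀ A ∈ D, ∀ t ∈ A.args, ∃ c, t = GTerm.const c)
    (q : List Atom) (hq : bcqTrue q (univModel P D))
    (I : Inst) (hI : isModel P D I) : bcqTrue q I := by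
  obtain ⟨θ, hθ⟩ := hq
  obtain ⟨n, hn⟩ := exists_stage_of_list P D θ q hθ
  obtain ⟨h, hc, hmap⟩ := homStage P D hD I hI n
  refine ⟨fun v => h (θ v), fun a ha => ?_⟩
  rw [← mapGA_applyAtom h hc]
  exact hmap _ (hn a ha)

end UniversalModelAux

/-- Entailment under tgds plus negative constraints reduces to
entailment under the tgds alone, of the query or of the existential closure of
the body of some negative constraint. -/
theorem tgd_nc_entailment_iff
    (PR : Set TGD) (PC : Set NegConstraint) (D : Finset GAtom) (hD : IsEDB D)
    (Q : List Atom) :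
    entailsTC PR PC ↑D Q ↔
      entailsT PR ↑D Q ∨ ∃ η ∈ PC, entailsT PR ↑D η := by
  have hD' : ∀ A ∈ (↑D : Set GAtom), ∀ t ∈ A.args, ∃ c, t = GTerm.const c := by
    intro A hA t ht
    exact hD A (by exact_mod_cast hA) t ht
  constructor
  · intro hE
    by_cases hη : ∃ η ∈ PC, bcqTrue η (univModel PR ↑D)
    · obtain ⟨η, hηC, hηT⟩ := hη
      exact Or.inr ⟨η, hηC, fun I hI => univModel_transfer PR ↑D hD' η hηT I hI⟩
    · push_neg at hη
      refine Or.inl (fun I hI => ?_)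
      have hQU : bcqTrue Q (univModel PR ↑D) :=
        hE _ (univModel_isModel PR ↑D) hη
      exact univModel_transfer PR ↑D hD' Q hQU I hI
  · rintro (h | ⟨η, hηC, hη⟩) I hI hC
    · exact h I hI
    · exact absurd (hη I hI) (hC η hηC)
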